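/- Let (M, d_M) and (N, d_N) be metric spaces and n ∈ ℕ. Then e^n(M; N) ≤ e_n(M; N) + 2. Here e_n(M; N) is the smallest constant K such that for every subset A ⊆ M with |A| ≤ n, every Lipschitz map φ : A → N extends to a map Φ : M → N with Lipschitz constant at most K times that of φ; and e^n(M; N) is the smallest constant K such that for every closed subset S ⊆ M and every x₁,…,xₙ ∈ M \ S, every Lipschitz map φ : S → N extends to Φ : S ∪ {x₁,…,xₙ} → N with Lipschitz constant at most K times that of φ. -/

import Mathlib

open Set ENNReal NNReal

/-- The (possibly infinite) Lipschitz constant of `φ` restricted to `A`. -/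
noncomputable def lipConstOn {M N : Type*} [MetricSpace M] [MetricSpace N]
    (φ : M → N) (A : Set M) : ℝ≥0∞ :=
  sInf {C : ℝ≥0∞ | ∀ x ∈ A, ∀ y ∈ A, edist (φ x) (φ y) ≤ C * edist x y}

/-- `extMod M N A B` is `e(B, A; N)`: the infimum over `K ∈ [1,∞]` such that every
Lipschitz map on `A` extends to `B` with Lipschitz constant at most `K` times as large. -/
noncomputable def extMod (M N : Type*) [MetricSpace M] [MetricSpace N]
    (A B : Set M) : ℝ≥0∞ :=
  sInf {K : ℝ≥0∞ | 1 ≤ K ∧ ∀ φ : M → N, lipConstOn φ A < ⊤ →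
    ∃ Φ : M → N, (∀ a ∈ A, Φ a = φ a) ∧ lipConstOn Φ B ≤ K * lipConstOn φ A}

/-- `eFin M N n = e_n(M; N)`: the supremum of `e(M, A; N)` over `A ⊆ M` with `|A| ≤ n`. -/
noncomputable def eFin (M N : Type*) [MetricSpace M] [MetricSpace N] (n : ℕ) : ℝ≥0∞ :=
  ⨆ (A : Set M) (_ : A.encard ≤ (n : ℕ∞)), extMod M N A Set.univ

/-- `eSup M N n = e^n(M; N)`: the supremum of `e(S ∪ {x₁,…,xₙ}, S; N)` over closed
`S ⊆ M` and `x₁,…,xₙ ∈ M \ S`. -/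
noncomputable def eSup (M N : Type*) [MetricSpace M] [MetricSpace N] (n : ℕ) : ℝ≥0∞ :=
  ⨆ (S : Set M) (_ : IsClosed S) (x : Fin n → M) (_ : ∀ j, x j ∉ S),
    extMod M N S (S ∪ Set.range x)

section aux
variable {M N : Type*} [MetricSpace M] [MetricSpace N]

lemma lipConstOn_le {φ : M → N} {A : Set M} {C : ℝ≥0∞}
    (h : ∀ x ∈ A, ∀ y ∈ A, edist (φ x) (φ y) ≤ C * edist x y) :
    lipConstOn φ A ≤ C := sInf_le h

lemma edist_le_lipConstOn {φ : M → N} {A : Set M} {x y : M} (hx : x ∈ A) (hy : y ∈ A) :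
    edist (φ x) (φ y) ≤ lipConstOn φ A * edist x y := by
  rcases eq_or_ne x y with rfl | hne
  · simp
  have h0 : edist x y ≠ 0 := by simpa using hne
  have ht : edist x y ≠ ⊤ := edist_ne_top x y
  rw [← ENNReal.div_le_iff h0 ht]
  refine le_sInf fun C hC => ?_
  rw [ENNReal.div_le_iff h0 ht]
  exact hC x hx y hy

lemma lipConstOn_mono {φ : M → N} {A B : Set M} (h : A ⊆ B) :
    lipConstOn φ A ≤ lipConstOn φ B :=
  sInf_le_sInf fun C hC x hx y hy => hC x (h hx) y (h hy)

lemma lipConstOn_empty (φ : M → N) : lipConstOn φ ∅ = 0 :=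
  le_antisymm (sInf_le (by simp)) zero_le

lemma lipConstOn_const (c : N) (A : Set M) : lipConstOn (fun _ : M => c) A = 0 :=
  le_antisymm (sInf_le (by intro x _ y _; simp)) zero_le

end aux

/-- `e^n(M; N) ≤ e_n(M; N) + 2`. -/
theorem eSup_le_eFin_add_two (M N : Type*) [MetricSpace M] [MetricSpace N] (n : ℕ) :
    eSup M N n ≤ eFin M N n + 2 := by
  classical
  by_cases hE : eFin M N n = ⊤
  · simp [hE]
  set E := eFin M N n with hEdef
  refine iSup_le fun S => iSup_le fun hS => iSup_le fun x => iSup_le fun hx => ?_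
  refine ENNReal.le_of_forall_pos_le_add fun δ hδ _ => ?_
  rw [add_assoc]
  refine sInf_le ⟨(one_le_two.trans le_self_add).trans le_add_self, ?_⟩
  intro φ hφ
  rcases eq_empty_or_nonempty S with rfl | ⟨s₀, hs₀⟩
  · -- empty case: the Lipschitz constant on `∅` is `0`.
    rw [lipConstOn_empty, mul_zero]
    rcases isEmpty_or_nonempty (Fin n) with hn | hn
    · refine ⟨φ, fun a ha => rfl, ?_⟩
      rw [range_eq_empty, empty_union, lipConstOn_empty]
    · refine ⟨fun _ => φ (x (Classical.arbitrary _)), fun a ha => absurd ha (notMem_empty a), ?_⟩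
      rw [lipConstOn_const]
  · -- main case
    set L := lipConstOn φ S with hL
    -- set up the small constants
    set e : ℝ≥0 := E.toNNReal with he
    have hEe : E = (e : ℝ≥0∞) := (ENNReal.coe_toNNReal hE).symm
    set D : ℝ≥0 := 1 + e + δ / 2 with hD
    have hD0 : D ≠ 0 := by positivity
    set ε : ℝ≥0 := (δ / 2) / D with hε
    have hε0 : (ε : ℝ≥0∞) ≠ 0 := by
      simp only [ne_eq, ENNReal.coe_eq_zero]
      positivity
    have hεD : ε * D = δ / 2 := div_mul_cancel₀ _ hD0
    -- choose almost-nearest points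
    have hchoice : ∀ j : Fin n, ∃ p ∈ S,
        edist (x j) p ≤ EMetric.infEdist (x j) S + ε * EMetric.infEdist (x j) S := by
      intro j
      have hdpos : EMetric.infEdist (x j) S ≠ 0 := by
        intro h0
        exact hx j ((EMetric.mem_iff_infEdist_zero_of_closed hS).2 h0)
      have hdtop : EMetric.infEdist (x j) S ≠ ⊤ :=
        ((EMetric.infEdist_le_edist_of_mem hs₀).trans_lt (edist_lt_top _ _)).ne
      have : EMetric.infEdist (x j) S < EMetric.infEdist (x j) S
          + ε * EMetric.infEdist (x j) S :=
        ENNReal.lt_add_right hdtop (by simp [hε0, hdpos])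
      obtain ⟨p, hp, hpe⟩ := EMetric.infEdist_lt_iff.1 this
      exact ⟨p, hp, hpe.le⟩
    choose s hsS hsd using hchoice
    -- the finite set A and the extension constant K
    set A : Set M := range s with hA
    have hAS : A ⊆ S := by rintro _ ⟨j, rfl⟩; exact hsS j
    have hAcard : A.encard ≤ (n : ℕ∞) := by
      have h1 : (s '' univ).encard ≤ (univ : Set (Fin n)).encard := Set.encard_image_le _ _
      rw [image_univ] at h1
      simpa [hA, Set.encard_univ] using h1
    have hAE : extMod M N A univ ≤ E :=
      le_iSup₂ (f := fun (A : Set M) (_ : A.encard ≤ (n : ℕ∞)) => extMod M N A univ) A hAcard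
    have hlt : extMod M N A univ < E + (δ / 2 : ℝ≥0) := by
      refine hAE.trans_lt (ENNReal.lt_add_right hE ?_)
      simp only [ne_eq, ENNReal.coe_eq_zero]
      positivity
    obtain ⟨K, ⟨hK1, hKext⟩, hKlt⟩ := sInf_lt_iff.1 hlt
    have hφA : lipConstOn φ A < ⊤ := (lipConstOn_mono hAS).trans_lt hφ
    obtain ⟨Ψ, hΨeq, hΨlip⟩ := hKext φ hφA
    set Φ : M → N := fun m => if m ∈ S then φ m else Ψ m with hΦ
    refine ⟨Φ, fun a ha => if_pos ha, ?_⟩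
    set C₀ : ℝ≥0∞ := 1 + (1 + K) * (1 + ε) with hC₀
    -- key pointwise estimate
    have key : ∀ u ∈ S, ∀ j : Fin n,
        edist (φ u) (Ψ (x j)) ≤ C₀ * L * edist u (x j) := by
      intro u hu j
      have hbd : edist (x j) (s j) ≤ edist (x j) u + ε * edist (x j) u := by
        refine (hsd j).trans ?_
        gcongr <;> exact EMetric.infEdist_le_edist_of_mem hu
      have h1 : edist (φ u) (φ (s j)) ≤ L * (edist u (x j) + edist (x j) (s j)) := by
        refine (edist_le_lipConstOn hu (hsS j)).trans ?_
        gcongr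
        exact edist_triangle _ _ _
      have h2 : edist (φ (s j)) (Ψ (x j)) ≤ K * L * edist (x j) (s j) := by
        rw [← hΨeq (s j) (mem_range_self j)]
        calc edist (Ψ (s j)) (Ψ (x j))
            ≤ lipConstOn Ψ univ * edist (s j) (x j) :=
              edist_le_lipConstOn (mem_univ _) (mem_univ _)
          _ ≤ K * lipConstOn φ A * edist (s j) (x j) := by gcongr
          _ ≤ K * L * edist (x j) (s j) := by
              rw [edist_comm (s j) (x j)]
              gcongr
              exact lipConstOn_mono hAS
      calc edist (φ u) (Ψ (x j))
          ≤ edist (φ u) (φ (s j)) + edist (φ (s j)) (Ψ (x j)) := edist_triangle _ _ _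
        _ ≤ L * (edist u (x j) + edist (x j) (s j)) + K * L * edist (x j) (s j) :=
            add_le_add h1 h2
        _ ≤ L * (edist u (x j) + (edist (x j) u + ε * edist (x j) u))
            + K * L * (edist (x j) u + ε * edist (x j) u) := by gcongr
        _ = C₀ * L * edist u (x j) := by rw [edist_comm (x j) u, hC₀]; ring
    have hKC : K ≤ C₀ := by
      calc K ≤ (1 + K) * (1 + ε) := by
            exact le_trans le_add_self (le_mul_of_one_le_right zero_le le_self_add)
        _ ≤ C₀ := le_add_self
    have hΦlip : lipConstOn Φ (S ∪ range x) ≤ C₀ * L := by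
      refine lipConstOn_le fun u hu v hv => ?_
      have hone : (1 : ℝ≥0∞) ≤ C₀ := le_self_add
      rcases hu with hu | ⟨i, rfl⟩ <;> rcases hv with hv | ⟨j, rfl⟩
      · rw [hΦ]; simp only [if_pos hu, if_pos hv]
        calc edist (φ u) (φ v) ≤ L * edist u v := edist_le_lipConstOn hu hv
          _ ≤ C₀ * L * edist u v := by
              rw [mul_assoc]
              exact le_mul_of_one_le_left zero_le hone
      · rw [hΦ]; simp only [if_pos hu, if_neg (hx j)]
        exact key u hu j
      · rw [hΦ]; simp only [if_pos hv, if_neg (hx i)]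
        rw [edist_comm, edist_comm (x i) v]
        exact key v hv i
      · rw [hΦ]; simp only [if_neg (hx i), if_neg (hx j)]
        calc edist (Ψ (x i)) (Ψ (x j))
            ≤ lipConstOn Ψ univ * edist (x i) (x j) :=
              edist_le_lipConstOn (mem_univ _) (mem_univ _)
          _ ≤ K * L * edist (x i) (x j) := by
              refine mul_le_mul_left (hΨlip.trans ?_) _
              gcongr
              exact lipConstOn_mono hAS
          _ ≤ C₀ * L * edist (x i) (x j) := by gcongr
    refine hΦlip.trans (mul_le_mul_left ?_ L)
    -- C₀ ≤ E + (2 + δ)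
    have hKfin : K ≠ ⊤ := hKlt.ne_top
    set k := K.toNNReal with hk
    have hKk : K = (k : ℝ≥0∞) := (ENNReal.coe_toNNReal hKfin).symm
    have hkle : k ≤ e + δ / 2 := by
      have h := hKlt.le
      rw [hKk, hEe, ← ENNReal.coe_add, ENNReal.coe_le_coe] at h
      exact h
    have hfinal : (1 : ℝ≥0) + (1 + k) * (1 + ε) ≤ e + (2 + δ) := by
      rw [← NNReal.coe_le_coe]
      push_cast
      have hεD' : (ε : ℝ) * (1 + e + δ / 2) = δ / 2 := by
        have h2 := congrArg (NNReal.toReal) hεD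
        push_cast [hD] at h2
        linarith [h2]
      have hkleR : (k : ℝ) ≤ e + δ / 2 := by exact_mod_cast hkle
      have h1 : (k : ℝ) * ε ≤ (e + δ / 2) * ε := by
        nlinarith [ε.coe_nonneg]
      nlinarith [hεD', h1, hkleR]
    calc C₀ = ((1 + (1 + k) * (1 + ε) : ℝ≥0) : ℝ≥0∞) := by
          rw [hC₀, hKk]; push_cast; ring
      _ ≤ ((e + (2 + δ) : ℝ≥0) : ℝ≥0∞) := ENNReal.coe_le_coe.2 hfinal
      _ = E + (2 + (δ : ℝ≥0∞)) := by rw [hEe]; push_cast; ring
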